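/- Let (T, ≤) be a totally ordered set, t ∈ T, and let Υ be a nonempty finite family of partitions of T_{≥t} into intervals, each of which is well-ordered by the relation ⊑ (S ⊑ R iff all elements of S are strictly below all elements of R, or S = R). Then the common refinement ⋂Υ := { ⋂_{π ∈ Υ} f(π) : f is a choice function selecting f(π) ∈ π for each π ∈ Υ, and ⋂_{π∈Υ} f(π) ≠ ∅ } is a partition of T_{≥t} that is well-ordered by ⊑. -/

import Mathlib

open Set

/-- `S` is preconnected in the order topology on `α`. -/
def OTconn {α : Type*} [LinearOrder α] (S : Set α) : Prop :=
  @IsPreconnected α (Preorder.topology α) S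

/-- Maximal order-connected sets on which `h` is constant. -/
def blocks {α β : Type*} [LinearOrder α] (h : α → β) : Set (Set α) :=
  {S | S.Nonempty ∧ OTconn S ∧
    ∀ R : Set α, OTconn R → S ⊆ R → (R = S ↔ ∃ a, ∀ x ∈ R, h x = a)}

/-- Interval order on sets: `S ⊑ R` iff every element of `S` is strictly below
every element of `R`, or `S = R`. -/
def blw {α : Type*} [LT α] (S R : Set α) : Prop :=
  (∀ s ∈ S, ∀ r ∈ R, s < r) ∨ S = R

/-- A family of sets is well-ordered by the interval order: it is totally ordered
and every nonempty subfamily has a minimum. -/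
def WOFam {α : Type*} [LT α] (π : Set (Set α)) : Prop :=
  (∀ S ∈ π, ∀ R ∈ π, blw S R ∨ blw R S) ∧
  ∀ ρ : Set (Set α), ρ ⊆ π → ρ.Nonempty → ∃ S ∈ ρ, ∀ R ∈ ρ, blw S R

/-- `π` is a partition of `U`: nonempty pairwise-disjoint sets covering `U`. -/
def PartOn {α : Type*} (U : Set α) (π : Set (Set α)) : Prop :=
  (∀ S ∈ π, S.Nonempty) ∧ ⋃₀ π = U ∧
  ∀ S ∈ π, ∀ R ∈ π, S ≠ R → Disjoint S R

/-- `S` is an interval: closed under betweenness. -/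
def IsIntervalIn {α : Type*} [Preorder α] (S : Set α) : Prop :=
  ∀ a ∈ S, ∀ b ∈ S, ∀ x, a ≤ x → x ≤ b → x ∈ S

section Aux
variable {T : Type*} [LinearOrder T]

lemma blw_refl (S : Set T) : blw S S := Or.inr rfl

lemma blw_subset {Q Q' S S' : Set T} (hQ : Q ⊆ S) (hQ' : Q' ⊆ S')
    (h : ∀ s ∈ S, ∀ r ∈ S', s < r) : blw Q Q' :=
  Or.inl fun q hq r hr => h q (hQ hq) r (hQ' hr)

lemma part_unique {U : Set T} {π : Set (Set T)} (h : PartOn U π)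
    {S S' : Set T} {x : T} (hS : S ∈ π) (hS' : S' ∈ π) (hx : x ∈ S) (hx' : x ∈ S') :
    S = S' := by
  by_contra hne
  exact (h.2.2 S hS S' hS' hne).ne_of_mem hx hx' rfl

def ref2 (π σ : Set (Set T)) : Set (Set T) :=
  {Q | ∃ S ∈ π, ∃ R ∈ σ, Q = S ∩ R ∧ Q.Nonempty}

lemma ref2_good {U : Set T} {π σ : Set (Set T)}
    (hπ : PartOn U π) (hπw : WOFam π) (hσ : PartOn U σ) (hσw : WOFam σ) :
    PartOn U (ref2 π σ) ∧ WOFam (ref2 π σ) := by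
  constructor
  · refine ⟨?_, ?_, ?_⟩
    · rintro Q ⟨S, hS, R, hR, rfl, hQne⟩
      exact hQne
    · ext x
      constructor
      · rintro ⟨Q, ⟨S, hS, R, hR, rfl, hQne⟩, hx⟩
        rw [← hπ.2.1]
        exact ⟨S, hS, hx.1⟩
      · intro hx
        obtain ⟨S, hS, hxS⟩ : x ∈ ⋃₀ π := by rw [hπ.2.1]; exact hx
        obtain ⟨R, hR, hxR⟩ : x ∈ ⋃₀ σ := by rw [hσ.2.1]; exact hx
        exact ⟨S ∩ R, ⟨S, hS, R, hR, rfl, ⟨x, hxS, hxR⟩⟩, hxS, hxR⟩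
    · rintro Q ⟨S, hS, R, hR, rfl, hQne⟩ Q' ⟨S', hS', R', hR', rfl, hQ'ne⟩ hne
      rw [Set.disjoint_left]
      intro x hx hx'
      have h1 : S = S' := part_unique hπ hS hS' hx.1 hx'.1
      have h2 : R = R' := part_unique hσ hR hR' hx.2 hx'.2
      exact hne (by rw [h1, h2])
  · constructor
    · rintro Q ⟨S, hS, R, hR, rfl, hQne⟩ Q' ⟨S', hS', R', hR', rfl, hQ'ne⟩
      by_cases hSS : S = S'
      · subst hSS
        by_cases hRR : R = R'
        · subst hRR; exact Or.inl (blw_refl _)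
        · rcases hσw.1 R hR R' hR' with h | h
          · exact Or.inl (blw_subset inter_subset_right inter_subset_right
              (h.resolve_right hRR))
          · exact Or.inr (blw_subset inter_subset_right inter_subset_right
              (h.resolve_right (Ne.symm hRR)))
      · rcases hπw.1 S hS S' hS' with h | h
        · exact Or.inl (blw_subset inter_subset_left inter_subset_left
            (h.resolve_right hSS))
        · exact Or.inr (blw_subset inter_subset_left inter_subset_left
            (h.resolve_right (Ne.symm hSS)))
    · intro ρ hρsub hρne
      classical
      set A : Set (Set T) := {S | S ∈ π ∧ ∃ R ∈ σ, S ∩ R ∈ ρ} with hA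
      have hAsub : A ⊆ π := fun S hS => hS.1
      have hAne : A.Nonempty := by
        obtain ⟨Q, hQ⟩ := hρne
        obtain ⟨S, hS, R, hR, hQeq, hQn⟩ := hρsub hQ
        exact ⟨S, hS, R, hR, hQeq ▸ hQ⟩
      obtain ⟨S₀, hS₀A, hS₀min⟩ := hπw.2 A hAsub hAne
      set B : Set (Set T) := {R | R ∈ σ ∧ S₀ ∩ R ∈ ρ} with hB
      have hBsub : B ⊆ σ := fun R hR => hR.1
      have hBne : B.Nonempty := by
        obtain ⟨R, hR, hmem⟩ := hS₀A.2
        exact ⟨R, hR, hmem⟩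
      obtain ⟨R₀, hR₀B, hR₀min⟩ := hσw.2 B hBsub hBne
      refine ⟨S₀ ∩ R₀, hR₀B.2, ?_⟩
      intro Q hQ
      obtain ⟨S, hS, R, hR, hQeq, hQn⟩ := hρsub hQ
      subst hQeq
      by_cases hSS : S₀ = S
      · subst hSS
        have hRB : R ∈ B := ⟨hR, hQ⟩
        by_cases hRR : R₀ = R
        · subst hRR; exact blw_refl _
        · exact blw_subset inter_subset_right inter_subset_right
            ((hR₀min R hRB).resolve_right hRR)
      · have hSA : S ∈ A := ⟨hS, R, hR, hQ⟩
        exact blw_subset inter_subset_left inter_subset_left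
          ((hS₀min S hSA).resolve_right hSS)

def refineSet (U : Set T) (Υ : Set (Set (Set T))) : Set (Set T) :=
  {Q | ∃ f : Set (Set T) → Set T, (∀ π ∈ Υ, f π ∈ π) ∧
    Q = U ∩ ⋂ π ∈ Υ, f π ∧ Q.Nonempty}

lemma refineSet_insert {U : Set T} {π₀ : Set (Set T)} {Υ : Set (Set (Set T))}
    (h : π₀ ∉ Υ) : refineSet U (insert π₀ Υ) = ref2 π₀ (refineSet U Υ) := by
  classical
  ext Q
  constructor
  · rintro ⟨f, hf, rfl, hQne⟩
    refine ⟨f π₀, hf π₀ (mem_insert _ _), U ∩ ⋂ π ∈ Υ, f π,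
      ⟨f, fun π hπ => hf π (Or.inr hπ), rfl, ?_⟩, ?_, hQne⟩
    · obtain ⟨x, hx⟩ := hQne
      rw [biInter_insert] at hx
      exact ⟨x, hx.1, hx.2.2⟩
    · rw [biInter_insert, inter_left_comm]
  · rintro ⟨S, hS, R, hR, rfl, hQne⟩
    obtain ⟨g, hg, rfl, hRne⟩ := hR
    refine ⟨Function.update g π₀ S, ?_, ?_, hQne⟩
    · rintro π (rfl | hπ)
      · rw [Function.update_self]; exact hS
      · have hne : π ≠ π₀ := fun he => h (he ▸ hπ)
        rw [Function.update_of_ne hne]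
        exact hg π hπ
    · have hcong : (⋂ π ∈ Υ, Function.update g π₀ S π) = ⋂ π ∈ Υ, g π := by
        refine iInter₂_congr fun π hπ => ?_
        have hne : π ≠ π₀ := fun he => h (he ▸ hπ)
        rw [Function.update_of_ne hne]
      rw [biInter_insert, hcong, Function.update_self, inter_left_comm]

lemma refine_good {U : Set T} (hU : U.Nonempty) {Υ : Set (Set (Set T))}
    (hfin : Υ.Finite) :
    (∀ π ∈ Υ, PartOn U π ∧ WOFam π) →
    PartOn U (refineSet U Υ) ∧ WOFam (refineSet U Υ) := by
  refine Set.Finite.induction_on (motive := fun Υ _ => (∀ π ∈ Υ, PartOn U π ∧ WOFam π) →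
      PartOn U (refineSet U Υ) ∧ WOFam (refineSet U Υ)) Υ hfin ?_ ?_
  · intro _
    have heq : refineSet U (∅ : Set (Set (Set T))) = {U} := by
      ext Q
      constructor
      · rintro ⟨f, _, rfl, hQne⟩
        simp
      · rintro rfl
        exact ⟨fun _ => ∅, by simp, by simp, hU⟩
    rw [heq]
    refine ⟨⟨?_, ?_, ?_⟩, ?_, ?_⟩
    · rintro S rfl; exact hU
    · simp
    · rintro S rfl R rfl hne; exact absurd rfl hne
    · rintro S rfl R rfl; exact Or.inl (blw_refl _)
    · intro ρ hρsub hρne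
      obtain ⟨S, hS⟩ := hρne
      refine ⟨S, hS, ?_⟩
      intro R hR
      have h1 : S = U := hρsub hS
      have h2 : R = U := hρsub hR
      rw [h1, h2]; exact blw_refl _
  · intro π₀ Υ' hx hs ih hΥ
    have h1 := ih (fun π hπ => hΥ π (Or.inr hπ))
    have h2 := hΥ π₀ (mem_insert _ _)
    rw [refineSet_insert hx]
    exact ref2_good h2.1 h2.2 h1.1 h1.2

end Aux

theorem stmt4 {T : Type*} [LinearOrder T] (t : T) (Υ : Set (Set (Set T)))
    (hfin : Υ.Finite) (hne : Υ.Nonempty)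
    (hΥ : ∀ π ∈ Υ, PartOn (Set.Ici t) π ∧ (∀ S ∈ π, IsIntervalIn S) ∧ WOFam π)
    (τ : Set (Set T))
    (hτ : τ = {Q | ∃ f : Set (Set T) → Set T, (∀ π ∈ Υ, f π ∈ π) ∧
      Q = (⋂ π ∈ Υ, f π) ∧ Q.Nonempty}) :
    PartOn (Set.Ici t) τ ∧ WOFam τ := by

  have key : τ = refineSet (Set.Ici t) Υ := by
    subst hτ
    ext Q
    have hsub : ∀ f : Set (Set T) → Set T, (∀ π ∈ Υ, f π ∈ π) →
        (⋂ π ∈ Υ, f π) ⊆ Set.Ici t := by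
      intro f hf
      obtain ⟨π₁, hπ₁⟩ := hne
      refine (biInter_subset_of_mem hπ₁).trans ?_
      rw [← (hΥ π₁ hπ₁).1.2.1]
      exact subset_sUnion_of_mem (hf π₁ hπ₁)
    constructor
    · rintro ⟨f, hf, rfl, hQne⟩
      exact ⟨f, hf, (inter_eq_self_of_subset_right (hsub f hf)).symm, hQne⟩
    · rintro ⟨f, hf, rfl, hQne⟩
      exact ⟨f, hf, inter_eq_self_of_subset_right (hsub f hf), hQne⟩
  rw [key]
  exact refine_good ⟨t, le_refl t⟩ hfin (fun π hπ => ⟨(hΥ π hπ).1, (hΥ π hπ).2.2⟩)
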